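/- If the set {xⁿ t s xᵐ : n, m ≥ 1} of words over three distinct letters x, t, s is stable with respect to a monoid M, then every block-simple word is a (τ₁ ∧ γ)-term for M. -/

import Mathlib

/-- Words over the countably infinite alphabet `ℕ`. -/
abbrev Word : Type := List ℕ

/-- A monoid `M` satisfies the identity `u ≈ v` if every substitution of letters by
elements of `M` (equivalently, every monoid homomorphism from the free monoid) equalizes
`u` and `v`. -/
def Satisfies (M : Type*) [Monoid M] (u v : Word) : Prop :=
  ∀ φ : ℕ → M, (u.map φ).prod = (v.map φ).prod

/-- A set of words `W` is stable with respect to a monoid `M`. -/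
def Stable (W : Set Word) (M : Type*) [Monoid M] : Prop :=
  ∀ u v : Word, u ∈ W → Satisfies M u v → v ∈ W

/-- `u` is a `τ`-term for the monoid `M`. -/
def IsTerm (τ : Word → Word → Prop) (M : Type*) [Monoid M] (u : Word) : Prop :=
  ∀ v : Word, Satisfies M u v → τ u v

/-- The set of simple letters of a word. -/
def simpSet (u : Word) : Set ℕ := {x | u.count x = 1}

/-- The set of multiple letters of a word. -/
def mulSet (u : Word) : Set ℕ := {x | 2 ≤ u.count x}

/-- The set of letters of a word. -/
def conSet (u : Word) : Set ℕ := {x | x ∈ u}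

/-- The monoid congruence on the free monoid generated by the pairs `(a, a²)`. -/
inductive tau1 : Word → Word → Prop
  | base (a : ℕ) : tau1 [a] [a, a]
  | refl (u : Word) : tau1 u u
  | symm {u v : Word} : tau1 u v → tau1 v u
  | trans {u v x : Word} : tau1 u v → tau1 v x → tau1 u x
  | append {u v u' v' : Word} : tau1 u v → tau1 u' v' → tau1 (u ++ u') (v ++ v')

/-- The relation γ. -/
def gamma (u v : Word) : Prop := simpSet u = simpSet v ∧ mulSet u = mulSet v

/-- The relation `τ₁ ∧ γ`. -/
def tau1gamma (u v : Word) : Prop := tau1 u v ∧ gamma u v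

/-- A word is block-simple if every factor all of whose letters are multiple
(in particular, every block) involves at most one letter. -/
def BlockSimple (u : Word) : Prop :=
  ∀ p f s : Word, u = p ++ f ++ s → (∀ x ∈ f, x ∈ mulSet u) →
    ∀ x ∈ f, ∀ y ∈ f, x = y

/-- `assemble m t A = A 0 ++ t 0 :: A 1 ++ t 1 :: ... ++ t (m-1) :: A m`:
the word with blocks `A i` separated by the letters `t i`. -/
def assemble (m : ℕ) (t : Fin m → ℕ) (A : Fin (m + 1) → Word) : Word :=
  A 0 ++ (List.ofFn fun i : Fin m => t i :: A i.succ).flatten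

/-- Common core of the relations `β` and `∼_Q`: `u` and `v` decompose into blocks
separated by the same simple letters in the same order, corresponding blocks have the
same content; when `withOrder = true`, in corresponding blocks the order of first
occurrences of letters coincides. -/
def betaAux (withOrder : Bool) (u v : Word) : Prop :=
  ∃ (m : ℕ) (t : Fin m → ℕ) (A B : Fin (m + 1) → Word),
    u = assemble m t A ∧ v = assemble m t B ∧
    (∀ i : Fin m, u.count (t i) = 1) ∧ (∀ i : Fin m, v.count (t i) = 1) ∧
    (∀ i : Fin (m + 1), ∀ x ∈ A i, x ∈ mulSet u) ∧
    (∀ i : Fin (m + 1), ∀ x ∈ B i, x ∈ mulSet v) ∧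
    (∀ i : Fin (m + 1), ∀ x : ℕ, x ∈ A i ↔ x ∈ B i) ∧
    (withOrder = true → ∀ i : Fin (m + 1), ∀ x y : ℕ, x ∈ A i → y ∈ A i → x ≠ y →
      ((A i).idxOf x < (A i).idxOf y ↔ (B i).idxOf x < (B i).idxOf y))

/-- The relation β. -/
def beta : Word → Word → Prop := betaAux true

/-- The relation `∼_Q` (β without the condition on the order of first occurrences). -/
def simQ : Word → Word → Prop := betaAux false

/-- The words `u_n` (letters: `a = 0`, `b = 1`, `t_k = k + 1`). -/
def uW : ℕ → Word
  | 0 => [0, 0, 1, 1]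
  | k + 1 => (if k % 2 = 0 then 0 else 1) :: (k + 2) :: uW k

/-- The words `v_n` (letters: `a = 0`, `b = 1`, `t_k = k + 1`). -/
def vW : ℕ → Word
  | 0 => [1, 1, 0, 0]
  | k + 1 => (if k % 2 = 0 then 0 else 1) :: (k + 2) :: vW k

/-- A monoid satisfies the identity system
`Σ_n = {xtx ≈ xtx², xtx ≈ x²tx, xy²x ≈ x²y², u_n ≈ v_n}`. -/
def SatSigma (n : ℕ) (N : Type*) [Monoid N] : Prop :=
  Satisfies N [0, 1, 0] [0, 1, 0, 0] ∧ Satisfies N [0, 1, 0] [0, 0, 1, 0] ∧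
  Satisfies N [0, 1, 1, 0] [0, 0, 1, 1] ∧ Satisfies N (uW n) (vW n)

/-- A monoid is finitely based. -/
def FinBased (M : Type*) [Monoid M] : Prop :=
  ∃ S : Finset (Word × Word),
    (∀ p ∈ S, Satisfies M p.1 p.2) ∧
    ∀ (N : Type) [Monoid N], (∀ p ∈ S, Satisfies N p.1 p.2) →
      ∀ u v : Word, Satisfies M u v → Satisfies N u v

/-- `U_n = x y₁² y₂² ⋯ y_n² x` (letters: `x = 0`, `y_i = i`). -/
def Uw (n : ℕ) : Word := 0 :: (((List.range n).map fun i => [i + 1, i + 1]).flatten ++ [0])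

/-- `V_n = x y₁² x y₂² x ⋯ x y_n² x` (letters: `x = 0`, `y_i = i`). -/
def Vw (n : ℕ) : Word := 0 :: ((List.range n).map fun i => [i + 1, i + 1, 0]).flatten

/-- The language `a⁺bb⁺ta⁺ = {aⁱ bʲ t aᵏ : i, k ≥ 1, j ≥ 2}` (`a = 0`, `b = 1`, `t = 2`). -/
def Lab : Set Word := {w | ∃ i j k : ℕ, 1 ≤ i ∧ 2 ≤ j ∧ 1 ≤ k ∧
  w = List.replicate i 0 ++ List.replicate j 1 ++ 2 :: List.replicate k 0}

/-- The β-class of `atb²a` as an explicit language: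
`{aⁱ t bʲ a w : i ≥ 1, j ≥ 2} ∪ {aⁱ t bʲ aᵏ b w : i, j, k ≥ 1}`, `w ∈ {a,b}*`
(`a = 0`, `b = 1`, `t = 2`). -/
def LatBBa : Set Word :=
  {w | (∃ i j : ℕ, 1 ≤ i ∧ 2 ≤ j ∧ ∃ r : Word, (∀ x ∈ r, x = 0 ∨ x = 1) ∧
      w = List.replicate i 0 ++ 2 :: (List.replicate j 1 ++ 0 :: r)) ∨
    (∃ i j k : ℕ, 1 ≤ i ∧ 1 ≤ j ∧ 1 ≤ k ∧ ∃ r : Word, (∀ x ∈ r, x = 0 ∨ x = 1) ∧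
      w = List.replicate i 0 ++ 2 :: (List.replicate j 1 ++ (List.replicate k 0 ++ 1 :: r)))}

/-- `u` is a factor (subword) of `x`. -/
def IsFactorOf (u x : Word) : Prop := ∃ p s : Word, x = p ++ u ++ s

/-- The syntactic congruence of a language `W`. -/
def SyntCon (W : Set Word) : Con (FreeMonoid ℕ) where
  r u v := ∀ p s : Word,
    p ++ FreeMonoid.toList u ++ s ∈ W ↔ p ++ FreeMonoid.toList v ++ s ∈ W
  iseqv := ⟨fun _ _ _ => Iff.rfl, fun h p s => (h p s).symm,
    fun h h' p s => (h p s).trans (h' p s)⟩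
  mul' := by
    intro w x y z h h' p s
    have h1 := h p (FreeMonoid.toList y ++ s)
    have h2 := h' (p ++ FreeMonoid.toList x) s
    simp only [FreeMonoid.toList_mul, List.append_assoc] at h1 h2 ⊢
    exact h1.trans h2

/-- The syntactic monoid of a language `W`. -/
abbrev SyntMonoid (W : Set Word) : Type := (SyntCon W).Quotient

/-! ### Concrete finite monoids -/

/-- The 7-element monoid `A¹`: identity `e1` adjoined to the semigroup `A = ⟨a,b,c ∣ a²=a, b²=b, ab=ca=0, ac=cb=c⟩ = {a,b,c,ba,bc,0}` (`z0` is the zero). -/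
inductive A1M : Type
  | e1 | a | b | c | ba | bc | z0
deriving DecidableEq

/-- Multiplication of `A1M`. -/
def A1M.mul : A1M → A1M → A1M
  | .e1, .e1 => .e1
  | .e1, .a => .a
  | .e1, .b => .b
  | .e1, .c => .c
  | .e1, .ba => .ba
  | .e1, .bc => .bc
  | .e1, .z0 => .z0
  | .a, .e1 => .a
  | .a, .a => .a
  | .a, .b => .z0
  | .a, .c => .c
  | .a, .ba => .z0
  | .a, .bc => .z0
  | .a, .z0 => .z0
  | .b, .e1 => .b
  | .b, .a => .ba
  | .b, .b => .b
  | .b, .c => .bc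
  | .b, .ba => .ba
  | .b, .bc => .bc
  | .b, .z0 => .z0
  | .c, .e1 => .c
  | .c, .a => .z0
  | .c, .b => .c
  | .c, .c => .z0
  | .c, .ba => .z0
  | .c, .bc => .z0
  | .c, .z0 => .z0
  | .ba, .e1 => .ba
  | .ba, .a => .ba
  | .ba, .b => .z0
  | .ba, .c => .bc
  | .ba, .ba => .z0
  | .ba, .bc => .z0
  | .ba, .z0 => .z0
  | .bc, .e1 => .bc
  | .bc, .a => .z0
  | .bc, .b => .bc
  | .bc, .c => .z0
  | .bc, .ba => .z0
  | .bc, .bc => .z0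
  | .bc, .z0 => .z0
  | .z0, .e1 => .z0
  | .z0, .a => .z0
  | .z0, .b => .z0
  | .z0, .c => .z0
  | .z0, .ba => .z0
  | .z0, .bc => .z0
  | .z0, .z0 => .z0

instance : Monoid A1M where
  one := .e1
  mul := A1M.mul
  mul_assoc := by intro x y z; cases x <;> cases y <;> cases z <;> rfl
  one_mul := by intro x; cases x <;> rfl
  mul_one := by intro x; cases x <;> rfl
/-- The 6-element monoid `E¹`: identity `e1` adjoined to the semigroup `E = ⟨a,b,c ∣ a²=ab=0, ba=ca=a, b²=bc=b, c²=cb=c⟩ = {a,b,c,ac,0}` (`z0` is the zero). -/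
inductive E1M : Type
  | e1 | a | b | c | ac | z0
deriving DecidableEq

/-- Multiplication of `E1M`. -/
def E1M.mul : E1M → E1M → E1M
  | .e1, .e1 => .e1
  | .e1, .a => .a
  | .e1, .b => .b
  | .e1, .c => .c
  | .e1, .ac => .ac
  | .e1, .z0 => .z0
  | .a, .e1 => .a
  | .a, .a => .z0
  | .a, .b => .z0
  | .a, .c => .ac
  | .a, .ac => .z0
  | .a, .z0 => .z0
  | .b, .e1 => .b
  | .b, .a => .a
  | .b, .b => .b
  | .b, .c => .b
  | .b, .ac => .ac
  | .b, .z0 => .z0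
  | .c, .e1 => .c
  | .c, .a => .a
  | .c, .b => .c
  | .c, .c => .c
  | .c, .ac => .ac
  | .c, .z0 => .z0
  | .ac, .e1 => .ac
  | .ac, .a => .z0
  | .ac, .b => .ac
  | .ac, .c => .ac
  | .ac, .ac => .z0
  | .ac, .z0 => .z0
  | .z0, .e1 => .z0
  | .z0, .a => .z0
  | .z0, .b => .z0
  | .z0, .c => .z0
  | .z0, .ac => .z0
  | .z0, .z0 => .z0

instance : Monoid E1M where
  one := .e1
  mul := E1M.mul
  mul_assoc := by intro x y z; cases x <;> cases y <;> cases z <;> rfl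
  one_mul := by intro x; cases x <;> rfl
  mul_one := by intro x; cases x <;> rfl
/-- The 5-element monoid `A₀¹`: identity `e1` adjoined to the semigroup `A₀ = ⟨a,b ∣ a²=a, b²=b, ab=0⟩ = {a,b,ba,0}` (`z0` is the zero). -/
inductive A01M : Type
  | e1 | a | b | ba | z0
deriving DecidableEq

/-- Multiplication of `A01M`. -/
def A01M.mul : A01M → A01M → A01M
  | .e1, .e1 => .e1
  | .e1, .a => .a
  | .e1, .b => .b
  | .e1, .ba => .ba
  | .e1, .z0 => .z0
  | .a, .e1 => .a
  | .a, .a => .a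
  | .a, .b => .z0
  | .a, .ba => .z0
  | .a, .z0 => .z0
  | .b, .e1 => .b
  | .b, .a => .ba
  | .b, .b => .b
  | .b, .ba => .ba
  | .b, .z0 => .z0
  | .ba, .e1 => .ba
  | .ba, .a => .ba
  | .ba, .b => .z0
  | .ba, .ba => .z0
  | .ba, .z0 => .z0
  | .z0, .e1 => .z0
  | .z0, .a => .z0
  | .z0, .b => .z0
  | .z0, .ba => .z0
  | .z0, .z0 => .z0

instance : Monoid A01M where
  one := .e1
  mul := A01M.mul
  mul_assoc := by intro x y z; cases x <;> cases y <;> cases z <;> rfl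
  one_mul := by intro x; cases x <;> rfl
  mul_one := by intro x; cases x <;> rfl


/-- The 3-element monoid `L₂¹`: the two-element left-zero semigroup with identity adjoined. -/
inductive LZ1 : Type
  | e | a | b
deriving DecidableEq

instance : Fintype LZ1 := Fintype.ofList [.e, .a, .b] (by intro x; cases x <;> decide)

instance : Monoid LZ1 where
  one := .e
  mul x y := match x with
    | .e => y
    | .a => .a
    | .b => .b
  mul_assoc := by decide
  one_mul := by decide
  mul_one := by decide

/-- The 3-element monoid `M(x) = {1, x, 0}` with `x·x = 0`. -/
inductive MX : Type
  | e | x | z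
deriving DecidableEq

instance : Fintype MX := Fintype.ofList [.e, .x, .z] (by intro x; cases x <;> decide)

instance : Monoid MX where
  one := .e
  mul a b := match a, b with
    | .e, b => b
    | a, .e => a
    | _, _ => .z
  mul_assoc := by decide
  one_mul := by decide
  mul_one := by decide


/-! ### Auxiliary machinery for `stmt1` -/

namespace BS

/-- The stable language `{0ⁿ 1 2 0ᵐ}`. -/
def Wst : Set Word := {w | ∃ n m : ℕ, 1 ≤ n ∧ 1 ≤ m ∧
  w = List.replicate n 0 ++ 1 :: 2 :: List.replicate m 0}

/-! #### Basic properties of `Satisfies` -/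

lemma sat_symm {M : Type*} [Monoid M] {u v : Word} (h : Satisfies M u v) : Satisfies M v u :=
  fun φ => (h φ).symm

lemma sat_context {M : Type*} [Monoid M] {u v : Word} (h : Satisfies M u v) (p s : Word) :
    Satisfies M (p ++ u ++ s) (p ++ v ++ s) := by
  intro φ
  simp only [List.map_append, List.prod_append, h φ]

lemma bind_map_prod {M : Type*} [Monoid M] (σ : ℕ → Word) (φ : ℕ → M) :
    ∀ w : Word, ((w.flatMap σ).map φ).prod = (w.map fun x => (((σ x).map φ).prod)).prod := by
  intro w
  induction w with
  | nil => simp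
  | cons a w ih => simp [List.map_append, List.prod_append, ih]

lemma sat_bind {M : Type*} [Monoid M] {u v : Word} (h : Satisfies M u v) (σ : ℕ → Word) :
    Satisfies M (u.flatMap σ) (v.flatMap σ) := by
  intro φ
  rw [bind_map_prod, bind_map_prod, h]

/-! #### The language `Wst` -/

lemma rep_split {x y : ℕ} (hx : x ≠ 0) (hy : y ≠ 0) :
    ∀ (a n : ℕ) (p q : Word),
      List.replicate a 0 ++ x :: p = List.replicate n 0 ++ y :: q →
      a = n ∧ x = y ∧ p = q := by
  intro a
  induction a with
  | zero =>
    intro n p q hEq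
    cases n with
    | zero => simpa using hEq
    | succ n =>
      simp only [List.replicate_succ, List.replicate, List.nil_append,
        List.cons_append, List.cons.injEq] at hEq
      exact absurd hEq.1 hx
  | succ a ih =>
    intro n p q hEq
    cases n with
    | zero =>
      simp only [List.replicate_succ, List.replicate, List.nil_append,
        List.cons_append, List.cons.injEq] at hEq
      exact absurd hEq.1.symm hy
    | succ n =>
      simp only [List.replicate_succ, List.cons_append, List.cons.injEq] at hEq
      obtain ⟨h1, h2, h3⟩ := ih n p q hEq.2
      exact ⟨by omega, h2, h3⟩

lemma Wshape {a b c : ℕ} :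
    (List.replicate a 0 ++ 1 :: (List.replicate b 0 ++ 2 :: List.replicate c 0)) ∈ Wst ↔
      (1 ≤ a ∧ b = 0 ∧ 1 ≤ c) := by
  constructor
  · rintro ⟨n, m, hn, hm, hEq⟩
    obtain ⟨han, -, htail⟩ := rep_split (by norm_num) (by norm_num) a n _ _ hEq
    have h2 : List.replicate b 0 ++ 2 :: List.replicate c 0 =
        List.replicate 0 0 ++ 2 :: List.replicate m 0 := by simpa using htail
    obtain ⟨hb0, -, hcm⟩ := rep_split (by norm_num) (by norm_num) b 0 _ _ h2
    have hc : c = m := by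
      have := congrArg List.length hcm; simpa using this
    exact ⟨by omega, hb0, by omega⟩
  · rintro ⟨ha, hb, hc⟩
    subst hb
    exact ⟨a, c, ha, hc, by simp⟩

lemma Wno21 {a : ℕ} {w : Word} : (List.replicate a 0 ++ 2 :: w) ∉ Wst := by
  rintro ⟨n, m, hn, hm, hEq⟩
  obtain ⟨-, h2, -⟩ := rep_split (by norm_num) (by norm_num) a n _ _ hEq
  norm_num at h2

lemma Wcount1 {w : Word} (h : w ∈ Wst) : w.count 1 = 1 := by
  obtain ⟨n, m, hn, hm, rfl⟩ := h
  simp [List.count_append, List.count_replicate, List.count_cons]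

/-! #### Computing substitutions -/

lemma bind_eq_rep (σ : ℕ → Word) (x : ℕ) :
    ∀ w : Word, (∀ y ∈ w, σ y = if y = x then [0] else []) →
      w.flatMap σ = List.replicate (w.count x) 0 := by
  intro w
  induction w with
  | nil => simp
  | cons a w ih =>
    intro h
    have ha := h a (by simp)
    have ih' := ih fun y hy => h y (by simp [hy])
    rw [List.flatMap_cons, ih', ha, List.count_cons]
    by_cases hax : a = x
    · simp [hax, List.replicate_succ]
    · have : (x == a) = false := by simp [Ne.symm hax]
      simp [hax, this]

lemma bind_eq_nil (σ : ℕ → Word) :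
    ∀ w : Word, (∀ y ∈ w, σ y = []) → w.flatMap σ = [] := by
  intro w
  induction w with
  | nil => simp
  | cons a w ih =>
    intro h
    rw [List.flatMap_cons, h a (by simp), ih fun y hy => h y (by simp [hy])]
    rfl

lemma bind_eq_rep_len (σ : ℕ → Word) :
    ∀ w : Word, (∀ y ∈ w, σ y = [0]) → w.flatMap σ = List.replicate w.length 0 := by
  intro w
  induction w with
  | nil => simp
  | cons a w ih =>
    intro h
    rw [List.flatMap_cons, h a (by simp), ih fun y hy => h y (by simp [hy])]
    simp [List.replicate_succ]

lemma count_bind_simple (σ : ℕ → Word) (x c : ℕ)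
    (hc : ∀ y, (σ y).count c = if y = x then 1 else 0) :
    ∀ w : Word, (w.flatMap σ).count c = w.count x := by
  intro w
  induction w with
  | nil => simp
  | cons a w ih =>
    rw [List.flatMap_cons, List.count_append, ih, hc a, List.count_cons]
    by_cases hax : a = x
    · simp [hax]; omega
    · simp [hax, Ne.symm hax]

lemma rep_snoc (n : ℕ) : List.replicate n 0 ++ [0] = 0 :: List.replicate n (0:ℕ) := by
  rw [← List.replicate_succ', List.replicate_succ]

/-! #### The `Before` relation -/

/-- `s` occurs before `t` in `w`. -/
def Before (s t : ℕ) (w : Word) : Prop := ∃ p q r : Word, w = p ++ s :: q ++ t :: r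

lemma Before.mem_left {s t : ℕ} {w : Word} (h : Before s t w) : s ∈ w := by
  obtain ⟨p, q, r, rfl⟩ := h; simp

lemma Before.mem_right {s t : ℕ} {w : Word} (h : Before s t w) : t ∈ w := by
  obtain ⟨p, q, r, rfl⟩ := h; simp

lemma Before.cons {s t a : ℕ} {w : Word} (h : Before s t w) : Before s t (a :: w) := by
  obtain ⟨p, q, r, rfl⟩ := h; exact ⟨a :: p, q, r, rfl⟩

lemma Before.of_cons {s t a : ℕ} {w : Word} (h : Before s t (a :: w)) :
    (a = s ∧ t ∈ w) ∨ Before s t w := by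
  obtain ⟨p, q, r, hEq⟩ := h
  cases p with
  | nil =>
    rw [List.nil_append, List.cons_append] at hEq
    obtain ⟨h1, h2⟩ := List.cons.inj hEq
    exact Or.inl ⟨h1, by rw [h2]; simp⟩
  | cons b p =>
    simp only [List.cons_append, List.cons.injEq] at hEq
    exact Or.inr ⟨p, q, r, hEq.2⟩

lemma before_total {s t : ℕ} {w : Word} (hs : s ∈ w) (ht : t ∈ w) (hst : s ≠ t) :
    Before s t w ∨ Before t s w := by
  induction w with
  | nil => simp at hs
  | cons a w ih =>
    by_cases has : a = s
    · subst has
      have htw : t ∈ w := by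
        rcases List.mem_cons.1 ht with h | h
        · exact absurd h.symm hst
        · exact h
      obtain ⟨q, r, rfl⟩ := List.append_of_mem htw
      exact Or.inl ⟨[], q, r, rfl⟩
    · by_cases hat : a = t
      · subst hat
        have hsw : s ∈ w := by
          rcases List.mem_cons.1 hs with h | h
          · exact absurd h hst
          · exact h
        obtain ⟨q, r, rfl⟩ := List.append_of_mem hsw
        exact Or.inr ⟨[], q, r, rfl⟩
      · have hs' : s ∈ w := by
          rcases List.mem_cons.1 hs with h | h
          · exact absurd h.symm has
          · exact h
        have ht' : t ∈ w := by
          rcases List.mem_cons.1 ht with h | h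
          · exact absurd h.symm hat
          · exact h
        rcases ih hs' ht' with h | h
        · exact Or.inl h.cons
        · exact Or.inr h.cons

lemma before_antisymm {s t : ℕ} {w : Word} (hnd : w.Nodup)
    (h1 : Before s t w) (h2 : Before t s w) : False := by
  induction w with
  | nil => obtain ⟨p, q, r, hEq⟩ := h1; simp at hEq
  | cons a w ih =>
    have hnd' : w.Nodup := hnd.of_cons
    have hna : a ∉ w := (List.nodup_cons.1 hnd).1
    rcases h1.of_cons with ⟨rfl, htw⟩ | h1'
    · rcases h2.of_cons with ⟨hat, hsw⟩ | h2'
      · exact hna (hat ▸ htw)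
      · exact hna h2'.mem_right
    · rcases h2.of_cons with ⟨rfl, hsw⟩ | h2'
      · exact hna h1'.mem_right
      · exact ih hnd' h1' h2'

lemma before_filter {S : ℕ → Bool} {s t : ℕ} (hs : S s = true) (ht : S t = true)
    {w : Word} (hb : Before s t w) : Before s t (w.filter S) := by
  obtain ⟨p, q, r, rfl⟩ := hb
  exact ⟨p.filter S, q.filter S, r.filter S, by
    simp [List.filter_append, List.filter_cons, hs, ht]⟩

lemma before_of_filter {S : ℕ → Bool} {s t : ℕ} {w : Word}
    (hnd : (w.filter S).Nodup) (hst : s ≠ t)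
    (hb : Before s t (w.filter S)) : Before s t w := by
  have hs := List.mem_filter.1 hb.mem_left
  have ht := List.mem_filter.1 hb.mem_right
  rcases before_total hs.1 ht.1 hst with h | h
  · exact h
  · exact absurd hb (fun _ => before_antisymm hnd hb (before_filter ht.2 hs.2 h))

lemma skeleton_eq : ∀ (L L' : List ℕ), L.Nodup → L'.Nodup →
    (∀ x, x ∈ L ↔ x ∈ L') →
    (∀ s t, s ≠ t → Before s t L → Before s t L') → L = L' := by
  intro L
  induction L with
  | nil =>
    intro L' _ _ hmem _
    cases L' with
    | nil => rfl
    | cons a L' => exact absurd ((hmem a).2 (by simp)) (by simp)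
  | cons s L₂ ih =>
    intro L' hnd hnd' hmem hbef
    have hsL₂ : s ∉ L₂ := (List.nodup_cons.1 hnd).1
    have hsL' : s ∈ L' := (hmem s).1 (by simp)
    obtain ⟨p, q, hpq⟩ := List.append_of_mem hsL'
    have hcount : List.count s L' ≤ 1 := List.nodup_iff_count_le_one.1 hnd' s
    have hcnt' : List.count s p + (List.count s q + 1) ≤ 1 := by
      rw [hpq] at hcount
      simpa [List.count_append, List.count_cons] using hcount
    have hsp : s ∉ p := by
      rw [← List.count_eq_zero]; omega
    have hsq : s ∉ q := by
      rw [← List.count_eq_zero]; omega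
    have hpnil : p = [] := by
      cases p with
      | nil => rfl
      | cons a p₂ =>
        exfalso
        have has : a ≠ s := fun hh => hsp (by simp [hh])
        have haL : a ∈ L₂ := by
          have : a ∈ s :: L₂ := (hmem a).2 (by rw [hpq]; simp)
          rcases List.mem_cons.1 this with hh | hh
          · exact absurd hh has
          · exact hh
        obtain ⟨q₁, q₂, hq⟩ := List.append_of_mem haL
        have hbsa : Before s a (s :: L₂) := ⟨[], q₁, q₂, by rw [hq]; rfl⟩
        have h1 : Before s a L' := hbef s a (Ne.symm has) hbsa
        have h2 : Before a s L' := ⟨[], p₂, q, by rw [hpq]; rfl⟩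
        exact before_antisymm hnd' h1 h2
    subst hpnil
    simp only [List.nil_append] at hpq
    subst hpq
    have htail : L₂ = q := by
      refine ih q hnd.of_cons hnd'.of_cons ?_ ?_
      · intro x
        constructor
        · intro hx
          have hxs : x ≠ s := fun hh => hsL₂ (hh ▸ hx)
          have : x ∈ s :: q := (hmem x).1 (by simp [hx])
          rcases List.mem_cons.1 this with hh | hh
          · exact absurd hh hxs
          · exact hh
        · intro hx
          have hxs : x ≠ s := fun hh => hsq (hh ▸ hx)
          have : x ∈ s :: L₂ := (hmem x).2 (by simp [hx])
          rcases List.mem_cons.1 this with hh | hh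
          · exact absurd hh hxs
          · exact hh
      · intro s' t' hst hb
        have hb1 : Before s' t' (s :: q) := hbef s' t' hst hb.cons
        rcases hb1.of_cons with ⟨rfl, _⟩ | hb2
        · exact absurd hb.mem_left hsL₂
        · exact hb2
    rw [htail]

/-! #### Decomposition into blocks -/

def assembleL : Word → List (ℕ × Word) → Word
  | A, [] => A
  | A, (t, B) :: L => A ++ t :: assembleL B L

def decompose (S : ℕ → Bool) : Word → Word × List (ℕ × Word)
  | [] => ([], [])
  | a :: w =>
    let d := decompose S w
    if S a then ([], (a, d.1) :: d.2) else (a :: d.1, d.2)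

lemma assembleL_cons (a : ℕ) (A : Word) (L : List (ℕ × Word)) :
    assembleL (a :: A) L = a :: assembleL A L := by
  cases L with
  | nil => rfl
  | cons p L => cases p; rfl

lemma assemble_decompose (S : ℕ → Bool) :
    ∀ w : Word, assembleL (decompose S w).1 (decompose S w).2 = w := by
  intro w
  induction w with
  | nil => rfl
  | cons a w ih =>
    by_cases h : S a
    · simp only [decompose, h, if_pos]
      simpa [assembleL] using ih
    · simp only [decompose, h, Bool.false_eq_true, if_neg, not_false_iff]
      rw [assembleL_cons, ih]

lemma decompose_fst_map (S : ℕ → Bool) :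
    ∀ w : Word, (decompose S w).2.map Prod.fst = w.filter S := by
  intro w
  induction w with
  | nil => rfl
  | cons a w ih =>
    by_cases h : S a
    · simp [decompose, h, ih]
    · simp [decompose, h, ih]

lemma decompose_head_not (S : ℕ → Bool) :
    ∀ w : Word, ∀ x ∈ (decompose S w).1, S x = false := by
  intro w
  induction w with
  | nil => intro x hx; simp [decompose] at hx
  | cons a w ih =>
    intro x hx
    by_cases h : S a
    · simp [decompose, h] at hx
    · simp only [decompose, h] at hx
      simp only [Bool.false_eq_true, if_neg, not_false_iff, List.mem_cons] at hx
      rcases hx with rfl | hx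
      · simpa using h
      · exact ih x hx

lemma decompose_blocks_not (S : ℕ → Bool) :
    ∀ w : Word, ∀ p ∈ (decompose S w).2, ∀ x ∈ p.2, S x = false := by
  intro w
  induction w with
  | nil => intro p hp; simp [decompose] at hp
  | cons a w ih =>
    intro p hp x hx
    by_cases h : S a
    · simp only [decompose, h, if_pos, List.mem_cons] at hp
      rcases hp with rfl | hp
      · exact decompose_head_not S w x hx
      · exact ih p hp x hx
    · simp only [decompose, h, Bool.false_eq_true, if_neg, not_false_iff] at hp
      exact ih p hp x hx

lemma assembleL_get_mid :
    ∀ (L : List (ℕ × Word)) (A : Word) (i : ℕ) (h : i + 1 < L.length),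
      ∃ P R : Word, assembleL A L =
        P ++ (L.get ⟨i, by omega⟩).1 ::
          ((L.get ⟨i, by omega⟩).2 ++ (L.get ⟨i + 1, h⟩).1 :: R) := by
  intro L
  induction L with
  | nil => intro A i h; simp at h
  | cons p L ih =>
    intro A i h
    obtain ⟨t, B⟩ := p
    cases i with
    | zero =>
      simp only [List.length_cons] at h
      cases L with
      | nil => simp at h
      | cons p' L' =>
        obtain ⟨t', B'⟩ := p'
        exact ⟨A, assembleL B' L', by simp [assembleL]⟩
    | succ i =>
      simp only [List.length_cons] at h
      obtain ⟨P, R, hPR⟩ := ih B i (by omega)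
      exact ⟨A ++ t :: P, R, by simp [assembleL, hPR]⟩

lemma assembleL_get_last :
    ∀ (L : List (ℕ × Word)) (A : Word) (i : ℕ) (h : i + 1 = L.length),
      ∃ P : Word, assembleL A L = P ++ (L.get ⟨i, by omega⟩).1 :: (L.get ⟨i, by omega⟩).2 := by
  intro L
  induction L with
  | nil => intro A i h; simp at h
  | cons p L ih =>
    intro A i h
    obtain ⟨t, B⟩ := p
    cases i with
    | zero =>
      simp only [List.length_cons] at h
      have : L = [] := by
        cases L with
        | nil => rfl
        | cons q L' => simp at h
      subst this
      exact ⟨A, by simp [assembleL]⟩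
    | succ i =>
      simp only [List.length_cons] at h
      obtain ⟨P, hP⟩ := ih B i (by omega)
      exact ⟨A ++ t :: P, by simp [assembleL, hP]⟩

/-! #### `tau1` lemmas -/

lemma tau1_rep_one (a : ℕ) : ∀ k : ℕ, 1 ≤ k → tau1 [a] (List.replicate k a) := by
  intro k
  induction k with
  | zero => omega
  | succ k ih =>
    intro _
    cases k with
    | zero => simpa using tau1.refl [a]
    | succ k =>
      have h1 : tau1 [a] ([a] ++ [a]) := tau1.base a
      have h2 : tau1 ([a] ++ [a]) ([a] ++ List.replicate (k + 1) a) :=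
        tau1.append (tau1.refl [a]) (ih (by omega))
      have : List.replicate (k + 2) a = [a] ++ List.replicate (k + 1) a := by
        simp [List.replicate_succ]
      rw [this]
      exact h1.trans h2

lemma tau1_of_single {A B : Word} (hA : ∀ x ∈ A, ∀ y ∈ A, x = y)
    (hAB : ∀ x, x ∈ A ↔ x ∈ B) : tau1 A B := by
  cases A with
  | nil =>
    have : B = [] := by
      rw [List.eq_nil_iff_forall_not_mem]
      intro x hx
      exact List.not_mem_nil ((hAB x).2 hx)
    rw [this]
    exact tau1.refl []
  | cons a A' =>
    have hAall : ∀ x ∈ a :: A', x = a := fun x hx => hA x hx a (by simp)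
    have hBall : ∀ x ∈ B, x = a := fun x hx => hAall x ((hAB x).2 hx)
    have haB : a ∈ B := (hAB a).1 (by simp)
    have hArep : a :: A' = List.replicate (a :: A').length a := List.eq_replicate_of_mem hAall
    have hBrep : B = List.replicate B.length a := List.eq_replicate_of_mem hBall
    rw [hArep, hBrep]
    exact ((tau1_rep_one a _ (by simp)).symm).trans
      (tau1_rep_one a _ (by
        have : 0 < B.length := List.length_pos_of_mem haB
        omega))

lemma tau1_assembleL :
    ∀ (L L' : List (ℕ × Word)) (A B : Word),
      tau1 A B →
      List.Forall₂ (fun p q => p.1 = q.1 ∧ tau1 p.2 q.2) L L' →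
      tau1 (assembleL A L) (assembleL B L') := by
  intro L
  induction L with
  | nil =>
    intro L' A B hAB hF
    cases hF
    exact hAB
  | cons p L ih =>
    intro L' A B hAB hF
    cases hF with
    | cons hpq hF' =>
      rename_i q L''
      obtain ⟨t, Ai⟩ := p
      obtain ⟨t', Bi⟩ := q
      obtain ⟨hts, htau⟩ := hpq
      simp only at hts htau
      subst hts
      have : tau1 (t :: assembleL Ai L) (t :: assembleL Bi L'') := by
        have := tau1.append (tau1.refl [t]) (ih L'' Ai Bi htau hF')
        simpa using this
      exact tau1.append hAB this

/-! #### Consequences of stability -/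

variable {M : Type*} [Monoid M] {u v : Word}

lemma transfer (hW : Stable Wst M) (sat : Satisfies M u v) (σ : ℕ → Word) (p s : Word) :
    (p ++ u.flatMap σ ++ s) ∈ Wst → (p ++ v.flatMap σ ++ s) ∈ Wst :=
  fun hm => hW _ _ hm (sat_context (sat_bind sat σ) p s)

lemma fact_mem (hW : Stable Wst M) (sat : Satisfies M u v) (x : ℕ) (hx : x ∈ u) : x ∈ v := by
  set σ : ℕ → Word := fun y => if y = x then [0] else [] with hσ
  have hbu : u.flatMap σ = List.replicate (u.count x) 0 := bind_eq_rep σ x u (fun y _ => rfl)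
  have hbv : v.flatMap σ = List.replicate (v.count x) 0 := bind_eq_rep σ x v (fun y _ => rfl)
  have shape : ∀ k : ℕ, ([] : Word) ++ List.replicate k 0 ++ [1, 2, 0] =
      List.replicate k 0 ++ 1 :: (List.replicate 0 0 ++ 2 :: List.replicate 1 0) := by
    intro k; simp
  have h1 : ([] : Word) ++ u.flatMap σ ++ [1, 2, 0] ∈ Wst := by
    rw [hbu, shape, Wshape]
    refine ⟨?_, rfl, le_refl 1⟩
    have := List.count_pos_iff.2 hx
    omega
  have h2 := transfer hW sat σ [] [1, 2, 0] h1
  rw [hbv, shape, Wshape] at h2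
  have := h2.1
  exact List.count_pos_iff.1 (by omega)

lemma fact_simple (hW : Stable Wst M) (sat : Satisfies M u v) (x : ℕ)
    (hx : u.count x = 1) : v.count x = 1 := by
  set σ : ℕ → Word := fun y => if y = x then [1, 2] else [0] with hσ
  have hxu : x ∈ u := List.count_pos_iff.1 (by omega)
  obtain ⟨p, q, hu⟩ := List.append_of_mem hxu
  have hcnt : List.count x p + (List.count x q + 1) = 1 := by
    rw [hu] at hx
    simpa [List.count_append, List.count_cons] using hx
  have hxp : x ∉ p := List.count_eq_zero.1 (by omega)
  have hxq : x ∉ q := List.count_eq_zero.1 (by omega)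
  have hbu : u.flatMap σ =
      List.replicate p.length 0 ++ [1, 2] ++ List.replicate q.length 0 := by
    rw [hu, List.flatMap_append, List.flatMap_cons]
    rw [bind_eq_rep_len σ p (fun y hy => by
      have : y ≠ x := fun hh => hxp (hh ▸ hy); simp [hσ, this]),
      bind_eq_rep_len σ q (fun y hy => by
      have : y ≠ x := fun hh => hxq (hh ▸ hy); simp [hσ, this])]
    simp [hσ]
  have h1 : [0] ++ u.flatMap σ ++ [0] ∈ Wst := by
    rw [hbu]
    have : [0] ++ (List.replicate p.length 0 ++ [1, 2] ++ List.replicate q.length 0) ++ [0] =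
        List.replicate (p.length + 1) 0 ++
          1 :: (List.replicate 0 0 ++ 2 :: List.replicate (q.length + 1) 0) := by
      simp [List.replicate_succ, List.replicate_succ', rep_snoc]
    rw [this, Wshape]
    omega
  have h2 := transfer hW sat σ [0] [0] h1
  have hc := Wcount1 h2
  have hcv : (v.flatMap σ).count 1 = v.count x :=
    count_bind_simple σ x 1 (fun y => by by_cases h : y = x <;> simp [hσ, h]) v
  rw [List.count_append, List.count_append] at hc
  simpa [hcv] using hc

lemma notmem_split2 {s t : ℕ} {w p q r : Word} (hw : w = p ++ s :: q ++ t :: r)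
    (hs : w.count s = 1) (ht : w.count t = 1) (hst : s ≠ t) :
    s ∉ p ∧ s ∉ q ∧ s ∉ r ∧ t ∉ p ∧ t ∉ q ∧ t ∉ r := by
  rw [hw] at hs ht
  simp only [List.count_append, List.count_cons] at hs ht
  simp [hst, Ne.symm hst] at hs ht
  refine ⟨List.count_eq_zero.1 (by omega), List.count_eq_zero.1 (by omega),
    List.count_eq_zero.1 (by omega), List.count_eq_zero.1 (by omega),
    List.count_eq_zero.1 (by omega), List.count_eq_zero.1 (by omega)⟩

lemma notmem_split1 {t : ℕ} {w p q : Word} (hw : w = p ++ t :: q)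
    (ht : w.count t = 1) : t ∉ p ∧ t ∉ q := by
  rw [hw] at ht
  simp only [List.count_append, List.count_cons] at ht
  simp at ht
  exact ⟨List.count_eq_zero.1 (by omega), List.count_eq_zero.1 (by omega)⟩

lemma fact_before (hW : Stable Wst M) (sat : Satisfies M u v) {s t : ℕ}
    (hsu : u.count s = 1) (htu : u.count t = 1)
    (hsv : v.count s = 1) (htv : v.count t = 1) (hst : s ≠ t)
    (hb : Before s t u) : Before s t v := by
  set σ : ℕ → Word := fun y => if y = s then [1] else if y = t then [2] else [] with hσ
  obtain ⟨p, q, r, hu⟩ := hb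
  obtain ⟨hsp, hsq, hsr, htp, htq, htr⟩ := notmem_split2 hu hsu htu hst
  have hbu : u.flatMap σ = [1, 2] := by
    rw [hu, List.flatMap_append, List.flatMap_cons, List.flatMap_append, List.flatMap_cons]
    rw [bind_eq_nil σ p (fun y hy => by
        have h1 : y ≠ s := fun hh => hsp (hh ▸ hy)
        have h2 : y ≠ t := fun hh => htp (hh ▸ hy)
        simp [hσ, h1, h2]),
      bind_eq_nil σ q (fun y hy => by
        have h1 : y ≠ s := fun hh => hsq (hh ▸ hy)
        have h2 : y ≠ t := fun hh => htq (hh ▸ hy)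
        simp [hσ, h1, h2]),
      bind_eq_nil σ r (fun y hy => by
        have h1 : y ≠ s := fun hh => hsr (hh ▸ hy)
        have h2 : y ≠ t := fun hh => htr (hh ▸ hy)
        simp [hσ, h1, h2])]
    simp [hσ, hst, Ne.symm hst]
  have h1 : [0] ++ u.flatMap σ ++ [0] ∈ Wst := by
    rw [hbu]
    have : ([0] : Word) ++ [1, 2] ++ [0] =
        List.replicate 1 0 ++ 1 :: (List.replicate 0 0 ++ 2 :: List.replicate 1 0) := by simp
    rw [this, Wshape]
    omega
  have h2 := transfer hW sat σ [0] [0] h1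
  have hsvm : s ∈ v := List.count_pos_iff.1 (by omega)
  have htvm : t ∈ v := List.count_pos_iff.1 (by omega)
  rcases before_total hsvm htvm hst with hb' | hb'
  · exact hb'
  · exfalso
    obtain ⟨p', q', r', hv⟩ := hb'
    obtain ⟨htp', htq', htr', hsp', hsq', hsr'⟩ := notmem_split2 hv htv hsv (Ne.symm hst)
    have hbv : v.flatMap σ = [2, 1] := by
      rw [hv, List.flatMap_append, List.flatMap_cons, List.flatMap_append, List.flatMap_cons]
      rw [bind_eq_nil σ p' (fun y hy => by
          have h1 : y ≠ s := fun hh => hsp' (hh ▸ hy)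
          have h2 : y ≠ t := fun hh => htp' (hh ▸ hy)
          simp [hσ, h1, h2]),
        bind_eq_nil σ q' (fun y hy => by
          have h1 : y ≠ s := fun hh => hsq' (hh ▸ hy)
          have h2 : y ≠ t := fun hh => htq' (hh ▸ hy)
          simp [hσ, h1, h2]),
        bind_eq_nil σ r' (fun y hy => by
          have h1 : y ≠ s := fun hh => hsr' (hh ▸ hy)
          have h2 : y ≠ t := fun hh => htr' (hh ▸ hy)
          simp [hσ, h1, h2])]
      simp [hσ, hst, Ne.symm hst]
    rw [hbv] at h2
    have : ([0] : Word) ++ [2, 1] ++ [0] = List.replicate 1 0 ++ 2 :: [1, 0] := by simp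
    rw [this] at h2
    exact Wno21 h2

lemma fact_between (hW : Stable Wst M) (sat : Satisfies M u v) {s t x : ℕ}
    (hsu : u.count s = 1) (htu : u.count t = 1)
    (hsv : v.count s = 1) (htv : v.count t = 1) (hst : s ≠ t)
    {p q r p' q' r' : Word}
    (hu : u = p ++ s :: q ++ t :: r) (hv : v = p' ++ s :: q' ++ t :: r')
    (hq : x ∉ q) : x ∉ q' := by
  set σ : ℕ → Word := fun y =>
    if y = s then [1] else if y = t then [2] else if y = x then [0] else [] with hσ
  obtain ⟨hsp, hsq, hsr, htp, htq, htr⟩ := notmem_split2 hu hsu htu hst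
  obtain ⟨hsp', hsq', hsr', htp', htq', htr'⟩ := notmem_split2 hv hsv htv hst
  have hrep : ∀ (w : Word), s ∉ w → t ∉ w →
      w.flatMap σ = List.replicate (w.count x) 0 := by
    intro w h1 h2
    refine bind_eq_rep σ x w (fun y hy => ?_)
    have hy1 : y ≠ s := fun hh => h1 (hh ▸ hy)
    have hy2 : y ≠ t := fun hh => h2 (hh ▸ hy)
    simp [hσ, hy1, hy2]
  have hflat : ∀ (P Q R : Word), s ∉ P → t ∉ P → s ∉ Q → t ∉ Q → s ∉ R → t ∉ R →
      (P ++ s :: Q ++ t :: R).flatMap σ =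
        List.replicate (P.count x) 0 ++
          1 :: (List.replicate (Q.count x) 0 ++ 2 :: List.replicate (R.count x) 0) := by
    intro P Q R h1 h2 h3 h4 h5 h6
    rw [List.flatMap_append, List.flatMap_cons, List.flatMap_append, List.flatMap_cons,
      hrep P h1 h2, hrep Q h3 h4, hrep R h5 h6]
    simp [hσ, hst, Ne.symm hst]
  have hwrap : ∀ (a b c : ℕ),
      ([0] : Word) ++ (List.replicate a 0 ++ 1 :: (List.replicate b 0 ++ 2 :: List.replicate c 0))
        ++ [0] = List.replicate (a + 1) 0 ++
          1 :: (List.replicate b 0 ++ 2 :: List.replicate (c + 1) 0) := by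
    intro a b c
    simp [List.replicate_succ, List.replicate_succ', rep_snoc]
  have h1 : [0] ++ u.flatMap σ ++ [0] ∈ Wst := by
    rw [hu, hflat p q r hsp htp hsq htq hsr htr, hwrap, Wshape]
    refine ⟨by omega, List.count_eq_zero.2 hq, by omega⟩
  have h2 := transfer hW sat σ [0] [0] h1
  rw [hv, hflat p' q' r' hsp' htp' hsq' htq' hsr' htr', hwrap, Wshape] at h2
  exact List.count_eq_zero.1 h2.2.1

lemma fact_head (hW : Stable Wst M) (sat : Satisfies M u v) {t x : ℕ}
    (htu : u.count t = 1) (htv : v.count t = 1) (hxt : x ≠ t)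
    {p q p' q' : Word} (hu : u = p ++ t :: q) (hv : v = p' ++ t :: q')
    (hp : x ∉ p) : x ∉ p' := by
  set σ : ℕ → Word := fun y => if y = t then [2] else if y = x then [0] else [] with hσ
  obtain ⟨htp, htq⟩ := notmem_split1 hu htu
  obtain ⟨htp', htq'⟩ := notmem_split1 hv htv
  have hrep : ∀ (w : Word), t ∉ w → w.flatMap σ = List.replicate (w.count x) 0 := by
    intro w h1
    refine bind_eq_rep σ x w (fun y hy => ?_)
    have hy1 : y ≠ t := fun hh => h1 (hh ▸ hy)
    simp [hσ, hy1]
  have hflat : ∀ (P Q : Word), t ∉ P → t ∉ Q →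
      (P ++ t :: Q).flatMap σ =
        List.replicate (P.count x) 0 ++ 2 :: List.replicate (Q.count x) 0 := by
    intro P Q h1 h2
    rw [List.flatMap_append, List.flatMap_cons, hrep P h1, hrep Q h2]
    simp [hσ, Ne.symm hxt]
  have hwrap : ∀ (a c : ℕ),
      ([0, 1] : Word) ++ (List.replicate a 0 ++ 2 :: List.replicate c 0) ++ [0] =
        List.replicate 1 0 ++
          1 :: (List.replicate a 0 ++ 2 :: List.replicate (c + 1) 0) := by
    intro a c
    simp [List.replicate_succ, List.replicate_succ', rep_snoc]
  have h1 : [0, 1] ++ u.flatMap σ ++ [0] ∈ Wst := by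
    rw [hu, hflat p q htp htq, hwrap, Wshape]
    refine ⟨le_refl 1, List.count_eq_zero.2 hp, by omega⟩
  have h2 := transfer hW sat σ [0, 1] [0] h1
  rw [hv, hflat p' q' htp' htq', hwrap, Wshape] at h2
  exact List.count_eq_zero.1 h2.2.1

lemma fact_tail (hW : Stable Wst M) (sat : Satisfies M u v) {t x : ℕ}
    (htu : u.count t = 1) (htv : v.count t = 1) (hxt : x ≠ t)
    {p q p' q' : Word} (hu : u = p ++ t :: q) (hv : v = p' ++ t :: q')
    (hq : x ∉ q) : x ∉ q' := by
  set σ : ℕ → Word := fun y => if y = t then [1] else if y = x then [0] else [] with hσ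
  obtain ⟨htp, htq⟩ := notmem_split1 hu htu
  obtain ⟨htp', htq'⟩ := notmem_split1 hv htv
  have hrep : ∀ (w : Word), t ∉ w → w.flatMap σ = List.replicate (w.count x) 0 := by
    intro w h1
    refine bind_eq_rep σ x w (fun y hy => ?_)
    have hy1 : y ≠ t := fun hh => h1 (hh ▸ hy)
    simp [hσ, hy1]
  have hflat : ∀ (P Q : Word), t ∉ P → t ∉ Q →
      (P ++ t :: Q).flatMap σ =
        List.replicate (P.count x) 0 ++ 1 :: List.replicate (Q.count x) 0 := by
    intro P Q h1 h2
    rw [List.flatMap_append, List.flatMap_cons, hrep P h1, hrep Q h2]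
    simp [hσ, Ne.symm hxt]
  have hwrap : ∀ (a b : ℕ),
      ([0] : Word) ++ (List.replicate a 0 ++ 1 :: List.replicate b 0) ++ [2, 0] =
        List.replicate (a + 1) 0 ++
          1 :: (List.replicate b 0 ++ 2 :: List.replicate 1 0) := by
    intro a b
    simp [List.replicate_succ, List.replicate_succ', rep_snoc]
  have h1 : [0] ++ u.flatMap σ ++ [2, 0] ∈ Wst := by
    rw [hu, hflat p q htp htq, hwrap, Wshape]
    refine ⟨by omega, List.count_eq_zero.2 hq, le_refl 1⟩
  have h2 := transfer hW sat σ [0] [2, 0] h1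
  rw [hv, hflat p' q' htp' htq', hwrap, Wshape] at h2
  exact List.count_eq_zero.1 h2.2.1

end BS
theorem stmt1 (M : Type*) [Monoid M]
    (h : Stable {w : Word | ∃ n m : ℕ, 1 ≤ n ∧ 1 ≤ m ∧
      w = List.replicate n 0 ++ 1 :: 2 :: List.replicate m 0} M) :
    ∀ u : Word, BlockSimple u → IsTerm tau1gamma M u := by
  intro u hbs v sat
  classical
  have hW : Stable BS.Wst M := h
  -- basic consequences of stability
  have hmem : ∀ x : ℕ, x ∈ u ↔ x ∈ v := fun x =>
    ⟨BS.fact_mem hW sat x, BS.fact_mem hW (BS.sat_symm sat) x⟩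
  have hcnt1 : ∀ x : ℕ, u.count x = 1 ↔ v.count x = 1 := fun x =>
    ⟨BS.fact_simple hW sat x, BS.fact_simple hW (BS.sat_symm sat) x⟩
  set S : ℕ → Bool := fun x => decide (u.count x = 1) with hS
  have hS1 : ∀ x, S x = true ↔ u.count x = 1 := fun x => by simp [hS]
  have hSv : ∀ x, S x = true ↔ v.count x = 1 := fun x => (hS1 x).trans (hcnt1 x)
  -- gamma
  have hgam : gamma u v := by
    constructor
    · exact Set.ext fun x => hcnt1 x
    · refine Set.ext fun x => ?_
      have h1 : 0 < u.count x ↔ 0 < v.count x := by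
        rw [List.count_pos_iff, List.count_pos_iff]; exact hmem x
      have h2 := hcnt1 x
      show 2 ≤ u.count x ↔ 2 ≤ v.count x
      omega
  -- the skeletons coincide
  have hnd : ∀ w : Word, (∀ x, S x = true → w.count x = 1) → (w.filter S).Nodup := by
    intro w hww
    rw [List.nodup_iff_count_le_one]
    intro a
    by_cases ha : S a = true
    · exact le_trans ((show (w.filter S).Sublist w from List.filter_sublist).count_le a) (le_of_eq (hww a ha))
    · have : a ∉ w.filter S := fun hm => ha (List.mem_filter.1 hm).2
      rw [List.count_eq_zero.2 this]; omega
  have hndu : (u.filter S).Nodup := hnd u fun x hx => (hS1 x).1 hx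
  have hndv : (v.filter S).Nodup := hnd v fun x hx => (hSv x).1 hx
  have hmemfu : ∀ x, x ∈ u.filter S ↔ u.count x = 1 := fun x => by
    rw [List.mem_filter]
    constructor
    · exact fun hh => (hS1 x).1 hh.2
    · intro hx
      exact ⟨List.count_pos_iff.1 (by omega), (hS1 x).2 hx⟩
  have hmemfv : ∀ x, x ∈ v.filter S ↔ v.count x = 1 := fun x => by
    rw [List.mem_filter]
    constructor
    · exact fun hh => (hSv x).1 hh.2
    · intro hx
      exact ⟨List.count_pos_iff.1 (by omega), (hSv x).2 hx⟩
  have hskel : u.filter S = v.filter S := by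
    refine BS.skeleton_eq _ _ hndu hndv (fun x => ?_) (fun s t hst hb => ?_)
    · rw [hmemfu, hmemfv, hcnt1]
    · have hsS : S s = true := (List.mem_filter.1 hb.mem_left).2
      have htS : S t = true := (List.mem_filter.1 hb.mem_right).2
      have h1 : BS.Before s t u := BS.before_of_filter hndu hst hb
      have h2 : BS.Before s t v := BS.fact_before hW sat ((hS1 s).1 hsS) ((hS1 t).1 htS)
        ((hSv s).1 hsS) ((hSv t).1 htS) hst h1
      exact BS.before_filter hsS htS h2
  -- decompositions
  set A0 : Word := (BS.decompose S u).1 with hA0def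
  set Lu : List (ℕ × Word) := (BS.decompose S u).2 with hLudef
  set B0 : Word := (BS.decompose S v).1 with hB0def
  set Lv : List (ℕ × Word) := (BS.decompose S v).2 with hLvdef
  have hu : BS.assembleL A0 Lu = u := BS.assemble_decompose S u
  have hv : BS.assembleL B0 Lv = v := BS.assemble_decompose S v
  have hfstu : Lu.map Prod.fst = u.filter S := BS.decompose_fst_map S u
  have hfstv : Lv.map Prod.fst = v.filter S := BS.decompose_fst_map S v
  have hfst : Lu.map Prod.fst = Lv.map Prod.fst := by rw [hfstu, hfstv, hskel]
  have hlen : Lu.length = Lv.length := by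
    have := congrArg List.length hfst; simpa using this
  have hsepu : ∀ (i : ℕ) (hi : i < Lu.length), S (Lu[i].1) = true := by
    intro i hi
    have hm : Lu[i].1 ∈ Lu.map Prod.fst :=
      List.mem_map_of_mem (List.getElem_mem hi)
    rw [hfstu] at hm
    exact (List.mem_filter.1 hm).2
  have hsep_eq : ∀ (i : ℕ) (h1 : i < Lu.length) (h2 : i < Lv.length),
      Lu[i].1 = Lv[i].1 := by
    intro i h1 h2
    have e1 : (Lu.map Prod.fst)[i]'(by simpa using h1) = Lu[i].1 := List.getElem_map _
    have e2 : (Lv.map Prod.fst)[i]'(by simpa using h2) = Lv[i].1 := List.getElem_map _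
    rw [← e1, ← e2]
    exact List.getElem_of_eq hfst _
  have hblku : ∀ (i : ℕ) (hi : i < Lu.length), ∀ x ∈ Lu[i].2, S x = false :=
    fun i hi x hx => BS.decompose_blocks_not S u Lu[i] (List.getElem_mem hi) x hx
  have hblkv : ∀ (i : ℕ) (hi : i < Lv.length), ∀ x ∈ Lv[i].2, S x = false :=
    fun i hi x hx => BS.decompose_blocks_not S v Lv[i] (List.getElem_mem hi) x hx
  have hA0blk : ∀ x ∈ A0, S x = false := BS.decompose_head_not S u
  have hB0blk : ∀ x ∈ B0, S x = false := BS.decompose_head_not S v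
  have hmulu : ∀ x, x ∈ u → S x = false → x ∈ mulSet u := by
    intro x hxu hxS
    show 2 ≤ u.count x
    have h1 : 0 < u.count x := List.count_pos_iff.2 hxu
    have h2 : ¬ u.count x = 1 := by simpa [hS] using hxS
    omega
  -- the middle and final blocks are related by tau1
  have hblocks : List.Forall₂ (fun p q => p.1 = q.1 ∧ tau1 p.2 q.2) Lu Lv := by
    rw [List.forall₂_iff_get]
    refine ⟨hlen, fun i h1 h2 => ?_⟩
    simp only [List.get_eq_getElem]
    have hfi : Lu[i].1 = Lv[i].1 := hsep_eq i h1 h2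
    refine ⟨hfi, ?_⟩
    have hsS : S (Lu[i].1) = true := hsepu i h1
    have hsu : u.count (Lu[i].1) = 1 := (hS1 _).1 hsS
    have hsv : v.count (Lu[i].1) = 1 := (hSv _).1 hsS
    by_cases hmid : i + 1 < Lu.length
    · -- a middle block
      have hmid' : i + 1 < Lv.length := by omega
      obtain ⟨P, R, hPR⟩ := BS.assembleL_get_mid Lu A0 i hmid
      obtain ⟨P', R', hPR'⟩ := BS.assembleL_get_mid Lv B0 i hmid'
      rw [hu] at hPR
      rw [hv] at hPR'
      simp only [List.get_eq_getElem] at hPR hPR'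
      have ht'S : S (Lu[i+1].1) = true := hsepu (i+1) hmid
      have htu : u.count (Lu[i+1].1) = 1 := (hS1 _).1 ht'S
      have htv : v.count (Lu[i+1].1) = 1 := (hSv _).1 ht'S
      have ht'v : Lv[i+1].1 = Lu[i+1].1 := (hsep_eq (i+1) hmid hmid').symm
      have hsv_eq : Lv[i].1 = Lu[i].1 := hfi.symm
      rw [ht'v, hsv_eq] at hPR'
      have hst : Lu[i].1 ≠ Lu[i+1].1 := by
        intro hh
        have hnd' : (Lu.map Prod.fst).Nodup := by rw [hfstu]; exact hndu
        have hfin : (⟨i, by simpa using h1⟩ : Fin (Lu.map Prod.fst).length) =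
            ⟨i + 1, by simpa using hmid⟩ := (List.Nodup.get_inj_iff hnd').1 (by
          simp only [List.get_eq_getElem, List.getElem_map]
          exact hh)
        have := Fin.mk.inj_iff.1 hfin
        omega
      have hPRb : u = P ++ (Lu[i].1 :: Lu[i].2) ++ (Lu[i+1].1 :: R) := by
        rw [hPR]; simp
      have hPRb' : v = P' ++ (Lu[i].1 :: Lv[i].2) ++ (Lu[i+1].1 :: R') := by
        rw [hPR']; simp
      have hcontent : ∀ x, x ∈ Lu[i].2 ↔ x ∈ Lv[i].2 := by
        intro x
        constructor
        · intro hx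
          by_contra hx'
          exact (BS.fact_between hW (BS.sat_symm sat) hsv htv hsu htu hst hPRb' hPRb hx') hx
        · intro hx
          by_contra hx'
          exact (BS.fact_between hW sat hsu htu hsv htv hst hPRb hPRb' hx') hx
      have hueq : u = (P ++ [Lu[i].1]) ++ Lu[i].2 ++ (Lu[i+1].1 :: R) := by
        rw [hPR]; simp
      have hsingle : ∀ x ∈ Lu[i].2, ∀ y ∈ Lu[i].2, x = y := by
        refine hbs (P ++ [Lu[i].1]) Lu[i].2 (Lu[i+1].1 :: R) hueq (fun x hx => ?_)
        refine hmulu x ?_ (hblku i h1 x hx)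
        rw [hueq]
        simp only [List.mem_append]
        exact Or.inl (Or.inr hx)
      exact BS.tau1_of_single hsingle hcontent
    · -- the final block
      have hlast : i + 1 = Lu.length := by omega
      have hlast' : i + 1 = Lv.length := by omega
      obtain ⟨P, hP⟩ := BS.assembleL_get_last Lu A0 i hlast
      obtain ⟨P', hP'⟩ := BS.assembleL_get_last Lv B0 i hlast'
      rw [hu] at hP
      rw [hv] at hP'
      simp only [List.get_eq_getElem] at hP hP'
      have hsv_eq : Lv[i].1 = Lu[i].1 := hfi.symm
      rw [hsv_eq] at hP'
      have hcontent : ∀ x, x ∈ Lu[i].2 ↔ x ∈ Lv[i].2 := by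
        intro x
        have hxt : x ≠ Lu[i].1 → True := fun _ => trivial
        constructor
        · intro hx
          have hxS : S x = false := hblku i h1 x hx
          have hxt : x ≠ Lu[i].1 := fun hh => by rw [hh] at hxS; rw [hsS] at hxS; simp at hxS
          by_contra hx'
          exact (BS.fact_tail hW (BS.sat_symm sat) hsv hsu hxt hP' hP hx') hx
        · intro hx
          have hxS : S x = false := hblkv i h2 x hx
          have hxt : x ≠ Lu[i].1 := fun hh => by rw [hh] at hxS; rw [hsS] at hxS; simp at hxS
          by_contra hx'
          exact (BS.fact_tail hW sat hsu hsv hxt hP hP' hx') hx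
      have hueq : u = (P ++ [Lu[i].1]) ++ Lu[i].2 ++ ([] : Word) := by
        rw [hP]; simp
      have hsingle : ∀ x ∈ Lu[i].2, ∀ y ∈ Lu[i].2, x = y := by
        refine hbs (P ++ [Lu[i].1]) Lu[i].2 ([] : Word) hueq (fun x hx => ?_)
        refine hmulu x ?_ (hblku i h1 x hx)
        rw [hueq]
        simp only [List.mem_append]
        exact Or.inl (Or.inr hx)
      exact BS.tau1_of_single hsingle hcontent
  -- the head blocks are related by tau1
  have hhead : tau1 A0 B0 := by
    cases hLue : Lu with
    | nil =>
      have hLve : Lv = [] := List.length_eq_zero_iff.1 (by rw [← hlen, hLue]; rfl)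
      rw [hLue] at hu
      rw [hLve] at hv
      have huA : A0 = u := hu
      have hvB : B0 = v := hv
      have hsingle : ∀ x ∈ A0, ∀ y ∈ A0, x = y := by
        refine hbs ([] : Word) A0 ([] : Word) (by rw [huA]; simp) (fun x hx => ?_)
        exact hmulu x (by rw [← huA]; exact hx) (hA0blk x hx)
      refine BS.tau1_of_single hsingle (fun x => ?_)
      rw [huA, hvB] at *
      exact hmem x
    | cons p L' =>
      obtain ⟨t1, A1⟩ := p
      have h0u : 0 < Lu.length := by rw [hLue]; simp
      have h0v : 0 < Lv.length := by omega
      have ht1 : Lu[0].1 = t1 := by simp [hLue]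
      have hA1 : Lu[0].2 = A1 := by simp [hLue]
      -- structure of v
      cases hLve : Lv with
      | nil => rw [hLve] at h0v; simp at h0v
      | cons p' L'' =>
        obtain ⟨t1', B1⟩ := p'
        have ht1' : Lv[0].1 = t1' := by simp [hLve]
        have ht1eq : t1 = t1' := by
          rw [← ht1, ← ht1']
          exact hsep_eq 0 h0u h0v
        subst ht1eq
        have huS : u = A0 ++ t1 :: BS.assembleL A1 L' := by
          rw [← hu, hLue]; rfl
        have hvS : v = B0 ++ t1 :: BS.assembleL B1 L'' := by
          rw [← hv, hLve]; rfl
        have ht1S : S t1 = true := by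
          have := hsepu 0 h0u; rw [ht1] at this; exact this
        have ht1u : u.count t1 = 1 := (hS1 _).1 ht1S
        have ht1v : v.count t1 = 1 := (hSv _).1 ht1S
        have hcontent : ∀ x, x ∈ A0 ↔ x ∈ B0 := by
          intro x
          constructor
          · intro hx
            have hxS : S x = false := hA0blk x hx
            have hxt : x ≠ t1 := fun hh => by rw [hh, ht1S] at hxS; simp at hxS
            by_contra hx'
            exact (BS.fact_head hW (BS.sat_symm sat) ht1v ht1u hxt hvS huS hx') hx
          · intro hx
            have hxS : S x = false := hB0blk x hx
            have hxt : x ≠ t1 := fun hh => by rw [hh, ht1S] at hxS; simp at hxS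
            by_contra hx'
            exact (BS.fact_head hW sat ht1u ht1v hxt huS hvS hx') hx
        have hsingle : ∀ x ∈ A0, ∀ y ∈ A0, x = y := by
          refine hbs ([] : Word) A0 (t1 :: BS.assembleL A1 L') (by rw [huS]; simp)
            (fun x hx => ?_)
          exact hmulu x (by rw [huS]; simp [hx]) (hA0blk x hx)
        exact BS.tau1_of_single hsingle hcontent
  refine ⟨?_, hgam⟩
  rw [← hu, ← hv]
  exact BS.tau1_assembleL Lu Lv A0 B0 hhead hblocks
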